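/- Let N be a finite set and v : Finset N \to \mathbb{R}. Suppose v = v_and + v_or as a pointwise sum of two functions. Define I_and(S) = \sum_{T \subseteq S} (-1)^{|S|-|T|} v_and(T) and I_or(S) = -\sum_{T \subseteq S} (-1)^{|S|-|T|} v_or(N \setminus T). If v_or(\emptyset) = 0, then for every T \subseteq N: v(T) = v(\emptyset) + \sum_{\emptyset \neq S \subseteq T} I_and(S) + \sum_{S \subseteq N, S \cap T \neq \emptyset} I_or(S). -/

import Mathlib

open Finset

lemma neg_one_pow_powerset {N : Type*} [DecidableEq N] (x : Finset N) :
    (∑ m ∈ x.powerset, (-1 : ℝ) ^ m.card) = if x = ∅ then 1 else 0 := by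
  have := Finset.sum_powerset_neg_one_pow_card (x := x)
  have h : ((∑ m ∈ x.powerset, (-1 : ℤ) ^ m.card : ℤ) : ℝ)
      = ∑ m ∈ x.powerset, (-1 : ℝ) ^ m.card := by push_cast; ring_nf
  rw [← h, this]; split <;> norm_num

lemma moebius {N : Type*} [DecidableEq N] (f : Finset N → ℝ) (W : Finset N) :
    ∑ S ∈ W.powerset, ∑ U ∈ S.powerset, (-1 : ℝ) ^ (S.card - U.card) * f U = f W := by
  rw [Finset.sum_comm' (t' := W.powerset)
      (s' := fun U => W.powerset.filter (fun S => U ⊆ S))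
      (by intro S U; simp only [mem_powerset, mem_filter]
          exact ⟨fun ⟨h1, h2⟩ => ⟨⟨h1, h2⟩, h2.trans h1⟩, fun ⟨⟨h1, h2⟩, _⟩ => ⟨h1, h2⟩⟩)]
  have key : ∀ U ∈ W.powerset,
      (∑ S ∈ W.powerset.filter (fun S => U ⊆ S), (-1 : ℝ) ^ (S.card - U.card) * f U)
        = if U = W then f U else 0 := by
    intro U hU
    rw [mem_powerset] at hU
    have himg : W.powerset.filter (fun S => U ⊆ S)
        = (W \ U).powerset.image (fun R => U ∪ R) := by
      ext S
      simp only [mem_filter, mem_powerset, mem_image]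
      constructor
      · rintro ⟨h1, h2⟩
        exact ⟨S \ U, sdiff_subset_sdiff h1 Subset.rfl, union_sdiff_of_subset h2⟩
      · rintro ⟨R, hR, rfl⟩
        exact ⟨union_subset hU (hR.trans sdiff_subset), subset_union_left⟩
    rw [himg, Finset.sum_image (by
      intro a ha b hb h
      rw [mem_coe, mem_powerset] at ha hb
      have ha' : Disjoint U a := disjoint_sdiff.mono_right ha
      have hb' : Disjoint U b := disjoint_sdiff.mono_right hb
      have := congrArg (· \ U) h
      simpa [union_sdiff_cancel_left ha', union_sdiff_cancel_left hb'] using this)]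
    have hcard : ∀ R ∈ (W \ U).powerset,
        (-1 : ℝ) ^ ((U ∪ R).card - U.card) * f U = (-1 : ℝ) ^ R.card * f U := by
      intro R hR
      rw [mem_powerset] at hR
      have hd : Disjoint U R := disjoint_sdiff.mono_right hR
      rw [card_union_of_disjoint hd, Nat.add_sub_cancel_left]
    rw [Finset.sum_congr rfl hcard, ← Finset.sum_mul, neg_one_pow_powerset]
    by_cases h : U = W
    · simp [h]
    · rw [if_neg (fun hs => h (hU.antisymm (sdiff_eq_empty_iff_subset.1 hs))),
        if_neg h, zero_mul]
  rw [Finset.sum_congr rfl key, Finset.sum_ite_eq' W.powerset W f,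
    if_pos (mem_powerset_self W)]

theorem and_or_universal_matching
    {N : Type*} [Fintype N] [DecidableEq N]
    (v vand vor : Finset N → ℝ)
    (hsum : ∀ T, v T = vand T + vor T)
    (hvor : vor ∅ = 0) :
    ∀ T : Finset N,
      v T = v ∅
        + (∑ S ∈ T.powerset.filter (fun S => S.Nonempty),
            (∑ U ∈ S.powerset, (-1 : ℝ) ^ (S.card - U.card) * vand U))
        + (∑ S ∈ Finset.univ.powerset.filter (fun S : Finset N => (S ∩ T).Nonempty),
            (-(∑ U ∈ S.powerset, (-1 : ℝ) ^ (S.card - U.card) * vor (Finset.univ \ U)))) := by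
  intro T
  have h1 : (∑ S ∈ T.powerset.filter (fun S => S.Nonempty),
      (∑ U ∈ S.powerset, (-1 : ℝ) ^ (S.card - U.card) * vand U)) = vand T - vand ∅ := by
    have hm := moebius vand T
    rw [← Finset.sum_filter_add_sum_filter_not T.powerset (fun S => S.Nonempty)] at hm
    have h0 : T.powerset.filter (fun S => ¬ S.Nonempty) = {∅} := by
      ext S
      simp only [Finset.mem_filter, Finset.mem_powerset, Finset.not_nonempty_iff_eq_empty,
        Finset.mem_singleton, and_iff_right_iff_imp]
      rintro rfl
      exact Finset.empty_subset T
    rw [h0, Finset.sum_singleton] at hm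
    simp only [Finset.powerset_empty, Finset.sum_singleton, Finset.card_empty,
      Nat.sub_zero, pow_zero, one_mul] at hm
    linarith
  have h2 : (∑ S ∈ Finset.univ.powerset.filter (fun S : Finset N => (S ∩ T).Nonempty),
      (-(∑ U ∈ S.powerset, (-1 : ℝ) ^ (S.card - U.card) * vor (Finset.univ \ U)))) = vor T := by
    have hall := moebius (fun U => vor (Finset.univ \ U)) Finset.univ
    have hsub := moebius (fun U => vor (Finset.univ \ U)) (Finset.univ \ T)
    simp only [Finset.sdiff_self, hvor, Finset.sdiff_sdiff_self_left,
      Finset.univ_inter] at hall hsub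
    rw [← Finset.sum_filter_add_sum_filter_not Finset.univ.powerset
      (fun S : Finset N => (S ∩ T).Nonempty)] at hall
    have hneg : Finset.univ.powerset.filter (fun S : Finset N => ¬ (S ∩ T).Nonempty)
        = (Finset.univ \ T).powerset := by
      ext S
      simp [Finset.not_nonempty_iff_eq_empty, ← Finset.disjoint_iff_inter_eq_empty,
        Finset.subset_sdiff]
    rw [hneg, hsub] at hall
    rw [Finset.sum_neg_distrib]
    linarith
  rw [h1, h2, hsum T, hsum ∅, hvor]
  ring
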